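/- Fix x ∈ (0,1), n ≥ 2, α > 0, and let T ~ Gamma(n, α), b = ln(2x-x²) < 0. Then E[((T+b)/T)^{n-1} · 1{T > -b}] = (2x-x²)^α, i.e., the estimator F̃(x) = ((T + ln(2x-x²))/T)^{n-1} (taken as 0 when T ≤ -ln(2x-x²)) is unbiased for the Topp-Leone CDF F(x) = (2x-x²)^α. -/

import Mathlib

open MeasureTheory Set

theorem umvue_cdf_unbiased (n : ℕ) (hn : 2 ≤ n) (α x : ℝ) (hα : 0 < α)
    (hx : x ∈ Ioo (0:ℝ) 1) :
    (∫ t in Ioi (-(Real.log (2*x - x^2))),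
        ((t + Real.log (2*x - x^2)) / t) ^ (n-1)
          * (α^n * t^(n-1) * Real.exp (-α * t) / Real.Gamma n))
      = (2*x - x^2) ^ α := by
  obtain ⟨hx0, hx1⟩ := hx
  set L : ℝ := 2*x - x^2 with hL
  have hL0 : 0 < L := by nlinarith
  have hL1 : L < 1 := by nlinarith
  set b : ℝ := Real.log L with hb
  have hbneg : b < 0 := Real.log_neg hL0 hL1
  have hΓ : 0 < Real.Gamma n := Real.Gamma_pos_of_pos (by positivity)
  have hstep1 : (∫ t in Ioi (-b),
        ((t + b) / t) ^ (n-1) * (α^n * t^(n-1) * Real.exp (-α * t) / Real.Gamma n))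
      = ∫ t in Ioi (-b),
        (α^n / Real.Gamma n * Real.exp (α*b)) *
          ((t+b)^(n-1) * Real.exp (-(α*(t+b)))) := by
    refine setIntegral_congr_fun measurableSet_Ioi (fun t ht => ?_)
    have ht0 : 0 < t := lt_trans (by linarith) ht
    rw [div_pow]
    have he : Real.exp (α * b) * Real.exp (-(α * (t + b))) = Real.exp (-(α * t)) := by
      rw [← Real.exp_add]; ring_nf
    field_simp
    rw [mul_assoc, ← Real.exp_add, show b * α + -((t + b) * α) = -(t * α) by ring]
  rw [hstep1, integral_const_mul]
  have hemb : MeasurableEmbedding (fun t : ℝ => t + b) :=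
    (Homeomorph.addRight b).measurableEmbedding
  have hmp : MeasurePreserving (fun t : ℝ => t + b) volume volume :=
    measurePreserving_add_right volume b
  have hpre : (fun t : ℝ => t + b) ⁻¹' (Ioi 0) = Ioi (-b) := by
    ext t
    simp only [mem_preimage, mem_Ioi]
    constructor <;> intro h <;> linarith
  have hstep2 : (∫ t in Ioi (-b), (t+b)^(n-1) * Real.exp (-(α*(t+b))))
      = ∫ s in Ioi (0:ℝ), s^(n-1) * Real.exp (-(α*s)) := by
    rw [← hpre]
    exact hmp.setIntegral_preimage_emb hemb
      (fun s => s^(n-1) * Real.exp (-(α*s))) (Ioi 0)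
  rw [hstep2]
  have hstep3 : (∫ s in Ioi (0:ℝ), s^(n-1) * Real.exp (-(α*s)))
      = ∫ s in Ioi (0:ℝ), s ^ ((n:ℝ)-1) * Real.exp (-(α*s)) := by
    refine setIntegral_congr_fun measurableSet_Ioi (fun s hs => ?_)
    have : (s:ℝ) ^ ((n:ℝ)-1) = s ^ (n-1 : ℕ) := by
      rw [show ((n:ℝ)-1) = ((n-1 : ℕ) : ℝ) by
        have : (1:ℕ) ≤ n := by omega
        push_cast [Nat.cast_sub this]; ring]
      exact Real.rpow_natCast s (n-1)
    rw [this]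
  rw [hstep3, Real.integral_rpow_mul_exp_neg_mul_Ioi (by positivity : (0:ℝ) < (n:ℝ)) hα]
  have hGn : Real.Gamma (n:ℝ) ≠ 0 := ne_of_gt (Real.Gamma_pos_of_pos (by positivity))
  rw [show ((1/α:ℝ) ^ (n:ℝ)) = (1/α)^n from Real.rpow_natCast _ n]
  have : α ^ n / Real.Gamma ↑n * Real.exp (α * b) * ((1 / α) ^ n * Real.Gamma ↑n)
      = Real.exp (α * b) := by
    field_simp
    rw [← mul_pow, mul_one_div_cancel hα.ne', one_pow]
  rw [this, hb, Real.rpow_def_of_pos hL0, mul_comm]
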